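/- Let (U_T(M), U_T(N)) be the Radford pair arising from the degree-0 embedding and projection of the graded Hopf algebra U_T(N) = ⊕_{n≥0} U_T(N)₍ₙ₎ with U_T(N)₍₀₎ = U_T(M). Then the space of right coinvariants R(1) = U_T(N)₍₁₎^{coR} in degree 1 equals ad(U_T(M))(v_λ), the image of v_λ under the adjoint action of U_T(M). -/

import Mathlib

open TensorProduct

open Coalgebra LinearMap

set_option linter.unusedVariables false
set_option linter.unreachableTactic false
set_option linter.unusedTactic false
set_option linter.unnecessarySeqFocus false

section Conv
variable {k C B : Type} [Field k] [AddCommGroup C] [Module k C] [Coalgebra k C]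
  [Ring B] [Algebra k B]

noncomputable def conv (f g : C →ₗ[k] B) : C →ₗ[k] B :=
  LinearMap.mul' k B ∘ₗ TensorProduct.map f g ∘ₗ Coalgebra.comul

noncomputable def cu : C →ₗ[k] B := Algebra.linearMap k B ∘ₗ Coalgebra.counit

lemma cu_apply (a : C) : (cu (k := k) (B := B)) a = algebraMap k B (counit a) := rfl

lemma conv_repr (f g : C →ₗ[k] B) {ι : Type*} (a : C) (r : Coalgebra.Repr k a ι) :
    conv f g a = ∑ j ∈ r.index, f (r.left j) * g (r.right j) := by
  simp [conv, ← r.eq, map_sum, LinearMap.mul'_apply]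

lemma conv_cu (f : C →ₗ[k] B) : conv f cu = f := by
  ext a
  rw [conv_repr f cu a (ℛ k a)]
  have h2 := congrArg (TensorProduct.rid k C) (Coalgebra.sum_tmul_counit_eq (R := k) (ℛ k a))
  simp only [map_sum, TensorProduct.rid_tmul, one_smul] at h2
  calc ∑ j ∈ (ℛ k a).index, f ((ℛ k a).left j) * cu ((ℛ k a).right j)
      = ∑ j ∈ (ℛ k a).index, counit (R := k) ((ℛ k a).right j) • f ((ℛ k a).left j) := by
        refine Finset.sum_congr rfl fun j _ => ?_
        rw [cu_apply, ← Algebra.commutes, ← Algebra.smul_def]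
    _ = f a := by
        simp_rw [← map_smul]
        rw [← map_sum, h2]

lemma cu_conv (f : C →ₗ[k] B) : conv cu f = f := by
  ext a
  rw [conv_repr cu f a (ℛ k a)]
  have h2 := congrArg (TensorProduct.lid k C) (Coalgebra.sum_counit_tmul_eq (R := k) (ℛ k a))
  simp only [map_sum, TensorProduct.lid_tmul, one_smul] at h2
  calc ∑ j ∈ (ℛ k a).index, cu ((ℛ k a).left j) * f ((ℛ k a).right j)
      = ∑ j ∈ (ℛ k a).index, counit (R := k) ((ℛ k a).left j) • f ((ℛ k a).right j) := by
        refine Finset.sum_congr rfl fun j _ => ?_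
        rw [cu_apply, ← Algebra.smul_def]
    _ = f a := by
        simp_rw [← map_smul]
        rw [← map_sum, h2]

lemma conv_assoc (f g h : C →ₗ[k] B) : conv (conv f g) h = conv f (conv g h) := by
  ext a
  have key := Coalgebra.sum_map_tmul_tmul_eq (LinearMap.id (R := k) (M := C)) .id .id a
    (repr := ℛ k a) (a₁ := fun j => ℛ k ((ℛ k a).left j))
    (a₂ := fun j => ℛ k ((ℛ k a).right j))
  have key2 := congrArg (LinearMap.mul' k B ∘ₗ
    (TensorProduct.map f (LinearMap.mul' k B ∘ₗ TensorProduct.map g h))) key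
  simp only [map_sum, TensorProduct.map_tmul, LinearMap.coe_comp, Function.comp_apply,
    LinearMap.id_coe, id_eq, LinearMap.mul'_apply] at key2
  rw [conv_repr (conv f g) h a (ℛ k a), conv_repr f (conv g h) a (ℛ k a)]
  calc ∑ j ∈ (ℛ k a).index, conv f g ((ℛ k a).left j) * h ((ℛ k a).right j)
      = ∑ j ∈ (ℛ k a).index, ∑ l ∈ (ℛ k ((ℛ k a).left j)).index,
          f ((ℛ k ((ℛ k a).left j)).left l) * (g ((ℛ k ((ℛ k a).left j)).right l)
            * h ((ℛ k a).right j)) := by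
        refine Finset.sum_congr rfl fun j _ => ?_
        rw [conv_repr f g _ (ℛ k ((ℛ k a).left j)), Finset.sum_mul]
        exact Finset.sum_congr rfl fun l _ => (mul_assoc _ _ _)
    _ = ∑ j ∈ (ℛ k a).index, ∑ l ∈ (ℛ k ((ℛ k a).right j)).index,
          f ((ℛ k a).left j) * (g ((ℛ k ((ℛ k a).right j)).left l)
            * h ((ℛ k ((ℛ k a).right j)).right l)) := key2.symm
    _ = ∑ j ∈ (ℛ k a).index, f ((ℛ k a).left j) * conv g h ((ℛ k a).right j) := by
        refine Finset.sum_congr rfl fun j _ => ?_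
        rw [conv_repr g h _ (ℛ k ((ℛ k a).right j)), Finset.mul_sum]

lemma comp_conv {B' : Type} [Ring B'] [Algebra k B'] (φ : B →ₐ[k] B') (f g : C →ₗ[k] B) :
    φ.toLinearMap ∘ₗ conv f g = conv (φ.toLinearMap ∘ₗ f) (φ.toLinearMap ∘ₗ g) := by
  ext a
  simp only [LinearMap.comp_apply, conv_repr f g a (ℛ k a),
    conv_repr (φ.toLinearMap ∘ₗ f) (φ.toLinearMap ∘ₗ g) a (ℛ k a), map_sum]
  exact Finset.sum_congr rfl fun j _ => map_mul φ _ _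

end Conv

section Hopf
variable {k H : Type} [Field k] [Ring H] [HopfAlgebra k H]

noncomputable def mulRepr {ι κ : Type} (x y : H) (rx : Coalgebra.Repr k x ι) (ry : Coalgebra.Repr k y κ) :
    Coalgebra.Repr k (x * y) (ι × κ) where
  index := rx.index ×ˢ ry.index
  left := fun q => rx.left q.1 * ry.left q.2
  right := fun q => rx.right q.1 * ry.right q.2
  eq := by
    rw [show CoalgebraStruct.comul (R := k) (x * y) = Coalgebra.comul (R := k) x *
      Coalgebra.comul (R := k) y from Bialgebra.comul_mul x y,
      ← rx.eq, ← ry.eq, Finset.sum_mul_sum]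
    rw [Finset.sum_product]
    simp [Algebra.TensorProduct.tmul_mul_tmul]

noncomputable def tmulRepr {ι κ : Type} (x y : H) (rx : Coalgebra.Repr k x ι) (ry : Coalgebra.Repr k y κ) :
    Coalgebra.Repr k (x ⊗ₜ[k] y) (ι × κ) where
  index := rx.index ×ˢ ry.index
  left := fun q => rx.left q.1 ⊗ₜ[k] ry.left q.2
  right := fun q => rx.right q.1 ⊗ₜ[k] ry.right q.2
  eq := by
    rw [show CoalgebraStruct.comul (R := k) (x ⊗ₜ[k] y) =
      TensorProduct.tensorTensorTensorComm k H H H H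
        (TensorProduct.map Coalgebra.comul Coalgebra.comul (x ⊗ₜ[k] y)) from rfl]
    rw [TensorProduct.map_tmul, ← rx.eq, ← ry.eq, TensorProduct.sum_tmul]
    rw [Finset.sum_product]
    simp [TensorProduct.tmul_sum, map_sum]

lemma counit_tmul (x y : H) :
    Coalgebra.counit (R := k) (x ⊗ₜ[k] y) = Coalgebra.counit (R := k) x * Coalgebra.counit (R := k) y := by
  rw [mul_comm]; rfl

lemma antipode_one' : HopfAlgebra.antipode (R := k) (1 : H) = 1 := by
  have := HopfAlgebra.mul_antipode_rTensor_comul_apply (R := k) (A := H) 1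
  rw [Bialgebra.comul_one, Algebra.TensorProduct.one_def,
    LinearMap.rTensor_tmul, LinearMap.mul'_apply, mul_one] at this
  simpa using this

noncomputable abbrev wrev : H ⊗[k] H →ₗ[k] H :=
  LinearMap.mul' k H ∘ₗ TensorProduct.map (HopfAlgebra.antipode (R := k)) (HopfAlgebra.antipode (R := k))
    ∘ₗ (TensorProduct.comm k H H).toLinearMap

lemma conv_mul_Smul :
    conv (LinearMap.mul' k H) (HopfAlgebra.antipode (R := k) ∘ₗ LinearMap.mul' k H) = cu := by
  apply TensorProduct.ext'
  intro x y
  rw [conv_repr _ _ _ (tmulRepr x y (ℛ k x) (ℛ k y))]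
  have h := HopfAlgebra.sum_mul_antipode_eq_algebraMap_counit (R := k) (mulRepr x y (ℛ k x) (ℛ k y))
  simp only [mulRepr, tmulRepr, LinearMap.comp_apply, LinearMap.mul'_apply] at h ⊢
  rw [h, cu_apply, _root_.counit_tmul, Bialgebra.counit_mul]

lemma conv_wrev_mul :
    conv (wrev (k := k) (H := H)) (LinearMap.mul' k H) = cu := by
  apply TensorProduct.ext'
  intro x y
  rw [conv_repr _ _ _ (tmulRepr x y (ℛ k x) (ℛ k y))]
  simp only [tmulRepr, wrev, LinearMap.comp_apply, LinearEquiv.coe_coe,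
    TensorProduct.comm_tmul, TensorProduct.map_tmul, LinearMap.mul'_apply]
  rw [Finset.sum_product]
  rw [Finset.sum_comm]
  have step : ∀ j ∈ (ℛ k y).index,
      ∑ i ∈ (ℛ k x).index,
        HopfAlgebra.antipode (R := k) ((ℛ k y).left j) * HopfAlgebra.antipode (R := k) ((ℛ k x).left i) *
          ((ℛ k x).right i * (ℛ k y).right j)
      = Coalgebra.counit (R := k) x •
          (HopfAlgebra.antipode (R := k) ((ℛ k y).left j) * (ℛ k y).right j) := by
    intro j _
    have hx := HopfAlgebra.sum_antipode_mul_eq_algebraMap_counit (R := k) (ℛ k x)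
    calc ∑ i ∈ (ℛ k x).index,
          HopfAlgebra.antipode (R := k) ((ℛ k y).left j) * HopfAlgebra.antipode (R := k) ((ℛ k x).left i) *
            ((ℛ k x).right i * (ℛ k y).right j)
        = HopfAlgebra.antipode (R := k) ((ℛ k y).left j) *
            ((∑ i ∈ (ℛ k x).index, HopfAlgebra.antipode (R := k) ((ℛ k x).left i) * (ℛ k x).right i) *
              (ℛ k y).right j) := by
          rw [Finset.sum_mul, Finset.mul_sum]
          exact Finset.sum_congr rfl fun i _ => by simp only [mul_assoc]
      _ = Coalgebra.counit (R := k) x •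
            (HopfAlgebra.antipode (R := k) ((ℛ k y).left j) * (ℛ k y).right j) := by
          rw [hx, ← Algebra.smul_def, mul_smul_comm]
  rw [Finset.sum_congr rfl step, ← Finset.smul_sum, HopfAlgebra.sum_antipode_mul_eq_algebraMap_counit (R := k) (ℛ k y),
    cu_apply, _root_.counit_tmul, Algebra.smul_def, ← map_mul]
end Hopf


theorem antipode_mul'' {k H : Type} [Field k] [Ring H] [HopfAlgebra k H] (x y : H) :
    HopfAlgebra.antipode (R := k) (x * y) =
      HopfAlgebra.antipode (R := k) y * HopfAlgebra.antipode (R := k) x := by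
  have key : wrev (k := k) (H := H) =
      HopfAlgebra.antipode (R := k) ∘ₗ LinearMap.mul' k H := by
    calc wrev (k := k) (H := H) = conv wrev cu := (conv_cu _).symm
      _ = conv wrev (conv (LinearMap.mul' k H)
            (HopfAlgebra.antipode (R := k) ∘ₗ LinearMap.mul' k H)) := by rw [conv_mul_Smul]
      _ = conv (conv wrev (LinearMap.mul' k H))
            (HopfAlgebra.antipode (R := k) ∘ₗ LinearMap.mul' k H) := (conv_assoc _ _ _).symm
      _ = conv cu (HopfAlgebra.antipode (R := k) ∘ₗ LinearMap.mul' k H) := by rw [conv_wrev_mul]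
      _ = _ := cu_conv _
  have h2 := LinearMap.congr_fun key (x ⊗ₜ[k] y)
  simpa [wrev] using h2.symm

section Main
variable {k H A : Type} [Field k]
  [Ring H] [HopfAlgebra k H] [Ring A] [HopfAlgebra k A]
  (i : H →ₐc[k] A) (p : A →ₐc[k] H) (v : A)

local notation "S" => HopfAlgebra.antipode (R := k)

/-- the right comodule map -/
noncomputable def rho : A →ₗ[k] A ⊗[k] H :=
  TensorProduct.map LinearMap.id p.toLinearMap ∘ₗ Coalgebra.comul

noncomputable def rhoA : A →ₐ[k] A ⊗[k] H :=
  (Algebra.TensorProduct.map (AlgHom.id k A) (p : A →ₐ[k] H)).comp (Bialgebra.comulAlgHom k A)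

lemma rho_eq : rho p = (rhoA p).toLinearMap := by
  rw [rhoA, AlgHom.comp_toLinearMap, rho]
  congr 1

lemma rho_mul (x y : A) : rho p (x * y) = rho p x * rho p y := by
  rw [rho_eq]; exact map_mul (rhoA p) x y

noncomputable def Gmap : H →ₗ[k] A ⊗[k] H :=
  TensorProduct.map i.toLinearMap LinearMap.id ∘ₗ Coalgebra.comul

noncomputable def GmapA : H →ₐ[k] A ⊗[k] H :=
  (Algebra.TensorProduct.map (i : H →ₐ[k] A) (AlgHom.id k H)).comp (Bialgebra.comulAlgHom k H)

lemma Gmap_eq : Gmap i = (GmapA i).toLinearMap := by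
  rw [GmapA, AlgHom.comp_toLinearMap, Gmap]
  congr 1

lemma rho_comp_i (hpi : ∀ h : H, p (i h) = h) : rho p ∘ₗ i.toLinearMap = Gmap i := by
  ext h
  show (TensorProduct.map LinearMap.id p.toLinearMap) (Coalgebra.comul (i h)) =
    (TensorProduct.map i.toLinearMap LinearMap.id) (Coalgebra.comul h)
  rw [← CoalgHomClass.map_comp_comul_apply i h, ← LinearMap.comp_apply,
    ← TensorProduct.map_comp]
  refine LinearMap.congr_fun ?_ (Coalgebra.comul (R := k) h)
  congr 1 <;> ext x <;> first | exact hpi x | rfl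

/-- the adjoint-orbit map `a ↦ ∑ i a₁ * v * i (S a₂)` -/
noncomputable def Fmap : H →ₗ[k] A :=
  TensorProduct.lift ((LinearMap.mul k A).comp (LinearMap.mulRight k v))
    ∘ₗ TensorProduct.map i.toLinearMap (i.toLinearMap ∘ₗ HopfAlgebra.antipode (R := k))
    ∘ₗ Coalgebra.comul

noncomputable def Lmap : H →ₗ[k] A := LinearMap.mulRight k v ∘ₗ i.toLinearMap

noncomputable def iS : H →ₗ[k] A := i.toLinearMap ∘ₗ HopfAlgebra.antipode (R := k)

lemma Fmap_eq : Fmap i v = conv (Lmap i v) (iS i) := by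
  have key : TensorProduct.lift ((LinearMap.mul k A).comp (LinearMap.mulRight k v)) ∘ₗ
      TensorProduct.map i.toLinearMap (i.toLinearMap ∘ₗ HopfAlgebra.antipode (R := k)) =
      LinearMap.mul' k A ∘ₗ TensorProduct.map (Lmap i v) (iS i) := by
    apply TensorProduct.ext'
    intro x y
    simp [Lmap, iS, LinearMap.mul'_apply]
  ext h
  have := LinearMap.congr_fun key (Coalgebra.comul (R := k) h)
  simpa [Fmap, conv] using this

lemma conv_iS_i : conv (iS i) i.toLinearMap = cu := by
  have h1 : conv (HopfAlgebra.antipode (R := k) (A := H)) LinearMap.id = (cu : H →ₗ[k] H) :=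
    HopfAlgebra.mul_antipode_rTensor_comul
  have h2 := comp_conv (k := k) (i : H →ₐ[k] A)
    (HopfAlgebra.antipode (R := k) (A := H)) LinearMap.id
  rw [h1] at h2
  have e1 : (i : H →ₐ[k] A).toLinearMap = i.toLinearMap := rfl
  rw [e1] at h2
  have e2 : i.toLinearMap ∘ₗ (LinearMap.id : H →ₗ[k] H) = i.toLinearMap := LinearMap.comp_id _
  rw [e2] at h2
  rw [iS, ← h2]
  ext h
  exact AlgHomClass.commutes i (Coalgebra.counit (R := k) h)

lemma conv_F_i : conv (Fmap i v) i.toLinearMap = Lmap i v := by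
  rw [Fmap_eq, conv_assoc, conv_iS_i, conv_cu]

lemma conv_G_GS (hpi : ∀ h : H, p (i h) = h) :
    conv (Gmap i) (Gmap i ∘ₗ HopfAlgebra.antipode (R := k)) = cu := by
  have h1 : conv (LinearMap.id : H →ₗ[k] H) (HopfAlgebra.antipode (R := k) (A := H)) = cu :=
    HopfAlgebra.mul_antipode_lTensor_comul
  have h2 := comp_conv (k := k) (GmapA i)
    (LinearMap.id : H →ₗ[k] H) (HopfAlgebra.antipode (R := k) (A := H))
  rw [h1, LinearMap.comp_id] at h2
  rw [Gmap_eq, ← h2]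
  ext h
  exact (GmapA i).commutes (Coalgebra.counit (R := k) h)

noncomputable def Xmap : H →ₗ[k] A ⊗[k] H :=
  TensorProduct.map (Lmap i v) LinearMap.id ∘ₗ Coalgebra.comul

lemma mulRight_G : LinearMap.mulRight k (v ⊗ₜ[k] (1 : H)) ∘ₗ
    TensorProduct.map i.toLinearMap (LinearMap.id : H →ₗ[k] H) =
    TensorProduct.map (Lmap i v) LinearMap.id := by
  apply TensorProduct.ext'
  intro x y
  simp [Lmap, Algebra.TensorProduct.tmul_mul_tmul]

lemma rho_Lmap (hpi : ∀ h : H, p (i h) = h)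
    (hvco : (TensorProduct.map LinearMap.id p.toLinearMap) (Coalgebra.comul v) = v ⊗ₜ[k] (1 : H)) :
    rho p ∘ₗ Lmap i v = Xmap i v := by
  ext h
  have h1 : rho p (Lmap i v h) = rho p (i h) * rho p v := by
    rw [show Lmap i v h = i h * v from rfl, rho_mul]
  have h2 : rho p (i h) = Gmap i h := LinearMap.congr_fun (rho_comp_i i p hpi) h
  have h3 : rho p v = v ⊗ₜ[k] (1 : H) := hvco
  rw [LinearMap.comp_apply, h1, h2, h3]
  have := LinearMap.congr_fun (mulRight_G i v) (Coalgebra.comul h)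
  simpa [Gmap, Xmap, LinearMap.mulRight] using this

lemma conv_Phi_G (hpi : ∀ h : H, p (i h) = h)
    (hvco : (TensorProduct.map LinearMap.id p.toLinearMap) (Coalgebra.comul v) = v ⊗ₜ[k] (1 : H)) :
    conv (rho p ∘ₗ Fmap i v) (Gmap i) = Xmap i v := by
  have h2 := comp_conv (k := k) (rhoA p) (Fmap i v) i.toLinearMap
  rw [conv_F_i] at h2
  rw [← rho_comp_i i p hpi, rho_eq, ← h2, ← rho_eq]
  exact rho_Lmap i p v hpi hvco

lemma conv_Psi_G :
    conv (((TensorProduct.mk k A H).flip 1) ∘ₗ Fmap i v) (Gmap i) = Xmap i v := by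
  ext a
  have key := Coalgebra.sum_map_tmul_tmul_eq (LinearMap.id (R := k) (M := H)) .id .id a
    (repr := ℛ k a) (a₁ := fun j => ℛ k ((ℛ k a).left j))
    (a₂ := fun j => ℛ k ((ℛ k a).right j))
  have key2 := congrArg (TensorProduct.map
      (LinearMap.mul' k A ∘ₗ TensorProduct.map (Fmap i v) i.toLinearMap) LinearMap.id ∘ₗ
      (TensorProduct.assoc k H H H).symm.toLinearMap) key
  simp only [map_sum, LinearMap.coe_comp, LinearEquiv.coe_coe, Function.comp_apply,
    LinearMap.id_coe, id_eq, TensorProduct.assoc_symm_tmul, TensorProduct.map_tmul,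
    LinearMap.mul'_apply] at key2
  calc (conv (((TensorProduct.mk k A H).flip 1) ∘ₗ Fmap i v) (Gmap i)) a
      = ∑ j ∈ (ℛ k a).index,
          (Fmap i v ((ℛ k a).left j) ⊗ₜ[k] (1 : H)) * Gmap i ((ℛ k a).right j) :=
        conv_repr _ _ a (ℛ k a)
    _ = ∑ j ∈ (ℛ k a).index, ∑ l ∈ (ℛ k ((ℛ k a).right j)).index,
          (Fmap i v ((ℛ k a).left j) * i.toLinearMap ((ℛ k ((ℛ k a).right j)).left l)) ⊗ₜ[k]
            ((ℛ k ((ℛ k a).right j)).right l) := by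
        refine Finset.sum_congr rfl fun j _ => ?_
        rw [show Gmap i ((ℛ k a).right j) = (TensorProduct.map i.toLinearMap LinearMap.id)
            (CoalgebraStruct.comul ((ℛ k a).right j)) from rfl,
          ← (ℛ k ((ℛ k a).right j)).eq, map_sum, Finset.mul_sum]
        refine Finset.sum_congr rfl fun l _ => ?_
        simp [Algebra.TensorProduct.tmul_mul_tmul]
    _ = ∑ j ∈ (ℛ k a).index, ∑ l ∈ (ℛ k ((ℛ k a).left j)).index,
          (Fmap i v ((ℛ k ((ℛ k a).left j)).left l) *
            i.toLinearMap ((ℛ k ((ℛ k a).left j)).right l)) ⊗ₜ[k]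
            ((ℛ k a).right j) := key2
    _ = ∑ j ∈ (ℛ k a).index, (Lmap i v ((ℛ k a).left j)) ⊗ₜ[k] ((ℛ k a).right j) := by
        refine Finset.sum_congr rfl fun j _ => ?_
        rw [← TensorProduct.sum_tmul]
        congr 1
        rw [← conv_repr (Fmap i v) i.toLinearMap ((ℛ k a).left j) (ℛ k ((ℛ k a).left j)),
          conv_F_i]
    _ = Xmap i v a := by
        rw [show Xmap i v a = (TensorProduct.map (Lmap i v) LinearMap.id)
            (CoalgebraStruct.comul a) from rfl, ← (ℛ k a).eq, map_sum]
        simp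

lemma Phi_eq_Psi (hpi : ∀ h : H, p (i h) = h)
    (hvco : (TensorProduct.map LinearMap.id p.toLinearMap) (Coalgebra.comul v) = v ⊗ₜ[k] (1 : H)) :
    rho p ∘ₗ Fmap i v = ((TensorProduct.mk k A H).flip 1) ∘ₗ Fmap i v := by
  calc rho p ∘ₗ Fmap i v = conv (rho p ∘ₗ Fmap i v) cu := (conv_cu _).symm
    _ = conv (rho p ∘ₗ Fmap i v)
          (conv (Gmap i) (Gmap i ∘ₗ HopfAlgebra.antipode (R := k))) := by
        rw [conv_G_GS i p hpi]
    _ = conv (conv (rho p ∘ₗ Fmap i v) (Gmap i))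
          (Gmap i ∘ₗ HopfAlgebra.antipode (R := k)) := (conv_assoc _ _ _).symm
    _ = conv (conv (((TensorProduct.mk k A H).flip 1) ∘ₗ Fmap i v) (Gmap i))
          (Gmap i ∘ₗ HopfAlgebra.antipode (R := k)) := by
        rw [conv_Phi_G i p v hpi hvco, conv_Psi_G i v]
    _ = conv (((TensorProduct.mk k A H).flip 1) ∘ₗ Fmap i v)
          (conv (Gmap i) (Gmap i ∘ₗ HopfAlgebra.antipode (R := k))) := conv_assoc _ _ _
    _ = _ := by rw [conv_G_GS i p hpi, conv_cu]

noncomputable def Pmap : A →ₗ[k] A :=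
  LinearMap.mul' k A ∘ₗ TensorProduct.map LinearMap.id (iS i) ∘ₗ rho p

lemma Pmap_coinv (x : A) (hx : rho p x = x ⊗ₜ[k] (1 : H)) : Pmap i p x = x := by
  rw [Pmap]
  simp only [LinearMap.comp_apply, hx, TensorProduct.map_tmul, LinearMap.mul'_apply,
    LinearMap.id_coe, id_eq]
  rw [show iS i (1 : H) = i ((HopfAlgebra.antipode (R := k) (1 : H))) from rfl, antipode_one',
    map_one, mul_one]

lemma Pmap_gen (hpi : ∀ h : H, p (i h) = h)
    (hvco : (TensorProduct.map LinearMap.id p.toLinearMap) (Coalgebra.comul v) = v ⊗ₜ[k] (1 : H))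
    (a b : H) :
    Pmap i p (i a * v * i b) = Coalgebra.counit (R := k) b • Fmap i v a := by
  have h1 : rho p (i a * v * i b) = Gmap i a * (v ⊗ₜ[k] (1 : H)) * Gmap i b := by
    have g1 : rho p (i a) = Gmap i a := LinearMap.congr_fun (rho_comp_i i p hpi) a
    have g2 : rho p (i b) = Gmap i b := LinearMap.congr_fun (rho_comp_i i p hpi) b
    have g3 : rho p v = v ⊗ₜ[k] (1 : H) := hvco
    rw [rho_mul, rho_mul, g1, g2, g3]
  have h2 : Gmap i a * (v ⊗ₜ[k] (1 : H)) = Xmap i v a := by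
    have := LinearMap.congr_fun (mulRight_G i v) (Coalgebra.comul (R := k) a)
    simpa [Gmap, Xmap, LinearMap.mulRight] using this
  have h3 : Xmap i v a * Gmap i b = ∑ j ∈ (ℛ k a).index, ∑ l ∈ (ℛ k b).index,
      (Lmap i v ((ℛ k a).left j) * i.toLinearMap ((ℛ k b).left l)) ⊗ₜ[k]
        ((ℛ k a).right j * (ℛ k b).right l) := by
    rw [show Xmap i v a = (TensorProduct.map (Lmap i v) LinearMap.id)
        (CoalgebraStruct.comul a) from rfl,
      show Gmap i b = (TensorProduct.map i.toLinearMap LinearMap.id)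
        (CoalgebraStruct.comul b) from rfl,
      ← (ℛ k a).eq, ← (ℛ k b).eq, map_sum, map_sum, Finset.sum_mul_sum]
    simp [Algebra.TensorProduct.tmul_mul_tmul]
  rw [Pmap, LinearMap.comp_apply, LinearMap.comp_apply, h1, h2, h3]
  simp only [map_sum, TensorProduct.map_tmul, LinearMap.mul'_apply, LinearMap.id_coe, id_eq]
  have inner : ∀ j, ∑ l ∈ (ℛ k b).index,
      (Lmap i v ((ℛ k a).left j) * i.toLinearMap ((ℛ k b).left l)) *
        iS i ((ℛ k a).right j * (ℛ k b).right l)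
      = Coalgebra.counit (R := k) b • (Lmap i v ((ℛ k a).left j) * iS i ((ℛ k a).right j)) := by
    intro j
    have e1 : ∀ l, (Lmap i v ((ℛ k a).left j) * i.toLinearMap ((ℛ k b).left l)) *
        iS i ((ℛ k a).right j * (ℛ k b).right l)
        = Lmap i v ((ℛ k a).left j) *
            ((i.toLinearMap ((ℛ k b).left l) *
              i.toLinearMap (HopfAlgebra.antipode (R := k) ((ℛ k b).right l))) *
              iS i ((ℛ k a).right j)) := by
      intro l
      rw [show iS i ((ℛ k a).right j * (ℛ k b).right l)
          = i (HopfAlgebra.antipode (R := k) ((ℛ k b).right l)) *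
            i (HopfAlgebra.antipode (R := k) ((ℛ k a).right j)) from by
        rw [show iS i ((ℛ k a).right j * (ℛ k b).right l)
            = i (HopfAlgebra.antipode (R := k) ((ℛ k a).right j * (ℛ k b).right l)) from rfl,
          antipode_mul'', map_mul]]
      rw [show iS i ((ℛ k a).right j)
          = i (HopfAlgebra.antipode (R := k) ((ℛ k a).right j)) from rfl]
      simp only [mul_assoc]
      rfl
    simp_rw [e1]
    rw [← Finset.mul_sum, ← Finset.sum_mul]
    have e2 : ∑ l ∈ (ℛ k b).index,
        i.toLinearMap ((ℛ k b).left l) *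
          i.toLinearMap (HopfAlgebra.antipode (R := k) ((ℛ k b).right l))
        = algebraMap k A (Coalgebra.counit (R := k) b) := by
      have hsum := HopfAlgebra.sum_mul_antipode_eq_algebraMap_counit (R := k) (ℛ k b)
      calc ∑ l ∈ (ℛ k b).index,
            i.toLinearMap ((ℛ k b).left l) *
              i.toLinearMap (HopfAlgebra.antipode (R := k) ((ℛ k b).right l))
          = i (∑ l ∈ (ℛ k b).index,
              (ℛ k b).left l * HopfAlgebra.antipode (R := k) ((ℛ k b).right l)) := by
            rw [map_sum]
            exact Finset.sum_congr rfl fun l _ => (map_mul i _ _).symm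
        _ = _ := by rw [hsum]; exact AlgHomClass.commutes i _
    rw [e2, ← Algebra.smul_def, mul_smul_comm]
  rw [Finset.sum_congr rfl (fun j _ => inner j), ← Finset.smul_sum]
  congr 1
  rw [Fmap_eq, conv_repr _ _ a (ℛ k a)]

end Main


/-- **Degree-one coinvariants of a graded Radford pair are the adjoint orbit
of `v_λ`.**  Let `(H, A)` be a Radford pair (`i : H → A`, `p : A → H` Hopf
morphisms with `p ∘ i = id`), coming from a graded Hopf algebra `A` with
degree-0 part `H`.  Let `N₁ ⊆ A` be the degree-1 component, stable under
left and right multiplication by degree-0 elements, let `v = v_λ ∈ N₁` be a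
right coinvariant, and suppose every element of `N₁` is a linear combination
of elements `i(a) * v * i(b)` with `a, b ∈ H`.  Then the space
`R(1) = N₁^{coR}` of right coinvariants in `N₁` equals `ad(H)(v)`, the image
of `v` under the adjoint action `ad(a)(v) = Σ i(a₍₁₎) v i(S(a₍₂₎))`. -/
theorem radford_degree_one_coinvariants_eq_adjoint_orbit
    (k H A : Type) [Field k]
    [Ring H] [HopfAlgebra k H] [Ring A] [HopfAlgebra k A]
    (i : H →ₐc[k] A) (p : A →ₐc[k] H) (hpi : ∀ h : H, p (i h) = h)
    (N₁ : Submodule k A) (v : A)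
    (hv : v ∈ N₁)
    -- `v` is a right coinvariant
    (hvco : (TensorProduct.map LinearMap.id p.toLinearMap)
        (Coalgebra.comul v) = v ⊗ₜ[k] (1 : H))
    -- `N₁` is spanned by the elements `i(a) * v * i(b)`
    (hspan : N₁ ≤ Submodule.span k {x : A | ∃ a b : H, x = i a * v * i b})
    -- `N₁` is stable under multiplication by degree-0 elements
    (hstab : ∀ (a b : H), ∀ x ∈ N₁, i a * x * i b ∈ N₁) :
    N₁ ⊓ LinearMap.ker
        ((TensorProduct.map LinearMap.id p.toLinearMap ∘ₗ Coalgebra.comul)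
          - (TensorProduct.mk k A H).flip 1)
      = LinearMap.range
          (TensorProduct.lift
              ((LinearMap.mul k A).comp (LinearMap.mulRight k v))
            ∘ₗ TensorProduct.map i.toLinearMap
                (i.toLinearMap ∘ₗ HopfAlgebra.antipode (R := k))
            ∘ₗ Coalgebra.comul) := by
  have hker : ∀ x : A, x ∈ LinearMap.ker
      ((TensorProduct.map LinearMap.id p.toLinearMap ∘ₗ Coalgebra.comul)
        - (TensorProduct.mk k A H).flip 1) ↔ rho p x = x ⊗ₜ[k] (1 : H) := by
    intro x
    rw [LinearMap.mem_ker, LinearMap.sub_apply, sub_eq_zero]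
    exact Iff.rfl
  have hFeq : (TensorProduct.lift ((LinearMap.mul k A).comp (LinearMap.mulRight k v))
        ∘ₗ TensorProduct.map i.toLinearMap
            (i.toLinearMap ∘ₗ HopfAlgebra.antipode (R := k))
        ∘ₗ Coalgebra.comul) = Fmap i v := rfl
  rw [hFeq]
  apply le_antisymm
  · rintro x hx
    obtain ⟨hxN, hxker⟩ := Submodule.mem_inf.mp hx
    have hco : rho p x = x ⊗ₜ[k] (1 : H) := (hker x).mp hxker
    have hPx : Pmap i p x = x := Pmap_coinv i p x hco
    have hmem : Pmap i p x ∈ Submodule.map (Pmap i p)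
        (Submodule.span k {x : A | ∃ a b : H, x = i a * v * i b}) :=
      Submodule.mem_map_of_mem (hspan hxN)
    rw [Submodule.map_span, hPx] at hmem
    refine Submodule.span_le.mpr ?_ hmem
    rintro y ⟨z, ⟨a, b, rfl⟩, rfl⟩
    rw [Pmap_gen i p v hpi hvco a b]
    exact ⟨Coalgebra.counit (R := k) b • a, by rw [map_smul]⟩
  · rintro x ⟨a, rfl⟩
    refine Submodule.mem_inf.mpr ⟨?_, ?_⟩
    · have hF : Fmap i v a = ∑ j ∈ (ℛ k a).index,
          Lmap i v ((ℛ k a).left j) * iS i ((ℛ k a).right j) := by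
        rw [Fmap_eq, conv_repr _ _ a (ℛ k a)]
      rw [hF]
      refine Submodule.sum_mem _ fun j _ => ?_
      exact hstab ((ℛ k a).left j) (HopfAlgebra.antipode (R := k) ((ℛ k a).right j)) v hv
    · exact (hker (Fmap i v a)).mpr
        (LinearMap.congr_fun (Phi_eq_Psi i p v hpi hvco) a)
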